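/- Suppose k and the resolvent r are summable, x is the solution of the Volterra summation equation, and φ : [0,∞) → [0,∞) is an increasing convex function. Then limsup_{n→∞} (1/n) Σ_{j=0}^n φ(|x(j)|) ≤ limsup_{n→∞} (1/n) Σ_{j=0}^n φ(|r|₁ |H(j)|), and limsup_{n→∞} (1/n) Σ_{j=0}^n φ(|H(j)|) ≤ limsup_{n→∞} (1/n) Σ_{j=0}^n φ((1 + |k|₁) |x(j)|), where |r|₁ = Σ_{j=0}^∞ |r(j)| and |k|₁ = Σ_{j=0}^∞ |k(j)|. -/

import Mathlib

open Filter Finset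

lemma aux_ite_sum (n j : ℕ) (g : ℕ → ℝ) :
    ∑ m ∈ range (n+1), (if j < m then g m else 0) = ∑ t ∈ range (n - j), g (j + 1 + t) := by
  rw [← Finset.sum_filter]
  have hf : (range (n+1)).filter (fun m => j < m) = Finset.Ico (j+1) (n+1) := by
    ext m; simp [Nat.lt_succ_iff]; omega
  rw [hf, Finset.sum_Ico_eq_sum_range]
  rw [Nat.succ_sub_succ]

lemma aux_triangle (N : ℕ) (f : ℕ → ℕ → ℝ) :
    ∑ m ∈ range N, ∑ j ∈ range m, f m j
      = ∑ j ∈ range N, ∑ m ∈ range N, if j < m then f m j else 0 := by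
  rw [← Finset.sum_comm]
  apply Finset.sum_congr rfl
  intro m hm
  rw [← Finset.sum_filter]
  apply (Finset.sum_congr _ (fun j _ => rfl)).symm
  ext j; simp [mem_range] at hm ⊢; omega

lemma aux_jensen (φ : ℝ → ℝ) (hφmono : MonotoneOn φ (Set.Ici 0))
    (hφconv : ConvexOn ℝ (Set.Ici 0) φ)
    (n : ℕ) (w p : ℕ → ℝ) (hw : ∀ i, i < n → 0 ≤ w i) (hp : ∀ i, i < n → 0 ≤ p i)
    (hw1 : ∑ i ∈ range n, w i ≤ 1) (t : ℝ) (ht0 : 0 ≤ t)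
    (ht : t ≤ ∑ i ∈ range n, w i * p i) :
    φ t ≤ (∑ i ∈ range n, w i * φ (p i)) + (1 - ∑ i ∈ range n, w i) * φ 0 := by
  set W := ∑ i ∈ range n, w i with hW
  set w' : ℕ → ℝ := fun i => if i < n then w i else 1 - W with hw'
  set p' : ℕ → ℝ := fun i => if i < n then p i else 0 with hp'
  have hw'0 : ∀ i ∈ range (n+1), 0 ≤ w' i := by
    intro i _
    by_cases h : i < n
    · simpa [hw', h] using hw i h
    · simp only [hw', h, if_false]; linarith
  have hsw : ∑ i ∈ range n, w' i = W := by
    rw [hW]; exact Finset.sum_congr rfl (fun i hi => by simp [hw', mem_range.1 hi])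
  have hw'1 : ∑ i ∈ range (n+1), w' i = 1 := by
    rw [Finset.sum_range_succ, hsw]; simp [hw']
  have hp'mem : ∀ i ∈ range (n+1), p' i ∈ Set.Ici (0:ℝ) := by
    intro i _
    by_cases h : i < n
    · simpa [hp', h] using hp i h
    · simp [hp', h]
  have hsum : ∑ i ∈ range (n+1), w' i • p' i = ∑ i ∈ range n, w i * p i := by
    rw [Finset.sum_range_succ]
    simp only [hw', hp', lt_irrefl, if_false, smul_eq_mul, mul_zero, add_zero]
    exact Finset.sum_congr rfl (fun i hi => by simp [mem_range.1 hi])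
  have hsum0 : 0 ≤ ∑ i ∈ range n, w i * p i :=
    Finset.sum_nonneg fun i hi => mul_nonneg (hw i (mem_range.1 hi)) (hp i (mem_range.1 hi))
  have h1 : φ t ≤ φ (∑ i ∈ range (n+1), w' i • p' i) := by
    rw [hsum]; exact hφmono ht0 hsum0 ht
  have h2 := hφconv.map_sum_le hw'0 hw'1 hp'mem
  refine h1.trans (h2.trans ?_)
  rw [Finset.sum_range_succ]
  have heq : ∑ i ∈ range n, w' i • φ (p' i) = ∑ i ∈ range n, w i * φ (p i) :=
    Finset.sum_congr rfl (fun i hi => by simp [hw', hp', mem_range.1 hi])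
  rw [heq]
  simp only [hw', hp', lt_irrefl, if_false, smul_eq_mul, le_refl]


/-- `r` is the resolvent of the kernel `k`:
`r(0) = 1` and `r(n+1) = Σ_{j=0}^n k(n−j) r(j)`. -/
def IsResolvent (k r : ℕ → ℝ) : Prop :=
  r 0 = 1 ∧ ∀ n : ℕ, r (n + 1) = ∑ j ∈ Finset.range (n + 1), k (n - j) * r j

/-- `x` solves the Volterra summation equation
`x(n+1) = Σ_{j=0}^n k(n−j) x(j) + H(n+1)`. -/
def IsVolterraSol (k H x : ℕ → ℝ) : Prop :=
  ∀ n : ℕ, x (n + 1) = (∑ j ∈ Finset.range (n + 1), k (n - j) * x j) + H (n + 1)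

lemma aux_voc (k r H x : ℕ → ℝ) (ξ : ℝ) (hres : IsResolvent k r)
    (hx0 : x 0 = ξ) (hx : IsVolterraSol k H x) :
    ∀ n : ℕ, x n = r n * ξ + ∑ j ∈ range n, r (n - 1 - j) * H (j + 1) := by
  intro n
  induction n using Nat.strong_induction_on with
  | _ n ih =>
    match n with
    | 0 => simp [hx0, hres.1]
    | Nat.succ n =>
      rw [hx n]
      have hstep : ∀ j ∈ range (n+1), k (n - j) * x j
          = k (n - j) * r j * ξ + ∑ i ∈ range j, k (n - j) * (r (j - 1 - i) * H (i + 1)) := by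
        intro j hj
        rw [ih j (mem_range.1 hj)]
        rw [mul_add, Finset.mul_sum, mul_assoc]
      rw [Finset.sum_congr rfl hstep, Finset.sum_add_distrib, ← Finset.sum_mul]
      have h1 : ∑ j ∈ range (n+1), k (n - j) * r j = r (n+1) := (hres.2 n).symm
      rw [h1, aux_triangle]
      have h2 : ∀ i ∈ range (n+1),
          (∑ m ∈ range (n+1), if i < m then k (n - m) * (r (m - 1 - i) * H (i + 1)) else 0)
          = (if i < n then r (n - i) * H (i+1) else 0) := by
        intro i hi
        rw [aux_ite_sum]
        by_cases hin : i < n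
        · rw [if_pos hin]
          obtain ⟨a, ha⟩ : ∃ a, n - i = a + 1 := ⟨n - i - 1, by omega⟩
          have hr : ∀ t ∈ range (n - i), k (n - (i + 1 + t)) * (r (i + 1 + t - 1 - i) * H (i + 1))
              = k (a - t) * r t * H (i + 1) := by
            intro t _
            have e1 : n - (i + 1 + t) = a - t := by omega
            have e2 : i + 1 + t - 1 - i = t := by omega
            rw [e1, e2, mul_assoc]
          rw [Finset.sum_congr rfl hr, ← Finset.sum_mul, ha, ← hres.2 a]
        · rw [if_neg hin]
          have : n - i = 0 := by omega
          simp [this]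
      rw [Finset.sum_congr rfl h2]
      have h3 : ∑ i ∈ range (n+1), (if i < n then r (n-i) * H (i+1) else 0)
          = ∑ i ∈ range n, r (n-i) * H (i+1) := by
        rw [Finset.sum_range_succ, if_neg (lt_irrefl n), add_zero]
        exact Finset.sum_congr rfl fun i hi => if_pos (mem_range.1 hi)
      rw [h3, Finset.sum_range_succ]
      have e : ∀ j : ℕ, n + 1 - 1 - j = n - j := fun j => by omega
      simp only [e, Nat.sub_self, hres.1, one_mul]
      ring

lemma aux_limsup (u v d : ℕ → ℝ) (hd : Tendsto d atTop (nhds 0))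
    (h : ∀ n, u n ≤ v n + d n) :
    limsup (fun n : ℕ => ((u n : ℝ) : EReal)) atTop
      ≤ limsup (fun n : ℕ => ((v n : ℝ) : EReal)) atTop := by
  apply EReal.le_of_forall_lt_iff_le.1
  intro z hz
  obtain ⟨w, hw1, hw2⟩ := EReal.exists_between_coe_real hz
  have hwz : w < z := by exact_mod_cast hw2
  have hev1 : ∀ᶠ n in atTop, (v n : EReal) < (w : EReal) := eventually_lt_of_limsup_lt hw1
  have hev2 : ∀ᶠ n in atTop, d n < z - w := hd.eventually (gt_mem_nhds (by linarith))
  apply Filter.limsup_le_of_le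
  · isBoundedDefault
  · filter_upwards [hev1, hev2] with n h1 h2
    have hv : v n < w := by exact_mod_cast h1
    have : u n ≤ z := by have := h n; linarith
    exact_mod_cast this

lemma aux_main (u v c : ℕ → ℝ) (C : ℝ) (hc : Tendsto c atTop (nhds 0))
    (h : ∀ n : ℕ, u n ≤ v n + (C + ∑ m ∈ range (n+1), c m)) :
    limsup (fun n : ℕ => (((1 / (n:ℝ)) * u n : ℝ) : EReal)) atTop ≤
      limsup (fun n : ℕ => (((1 / (n:ℝ)) * v n : ℝ) : EReal)) atTop := by
  apply aux_limsup _ _ (fun n => (1/(n:ℝ)) * (C + ∑ m ∈ range (n+1), c m))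
  · have t1 : Tendsto (fun n : ℕ => (1/(n:ℝ)) * C) atTop (nhds 0) := by
      simpa using tendsto_one_div_atTop_nhds_zero_nat.mul_const C
    have hs1 : Tendsto (fun n : ℕ => (((n+1:ℕ) : ℝ))⁻¹ * ∑ m ∈ range (n+1), c m)
        atTop (nhds 0) := hc.cesaro.comp (tendsto_add_atTop_nat 1)
    have hq : Tendsto (fun n : ℕ => ((n:ℝ)+1)/(n:ℝ)) atTop (nhds 1) := by
      have h0 : Tendsto (fun n : ℕ => 1 + 1/(n:ℝ)) atTop (nhds (1+0)) :=
        tendsto_const_nhds.add tendsto_one_div_atTop_nhds_zero_nat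
      rw [add_zero] at h0
      apply h0.congr'
      filter_upwards [eventually_ge_atTop 1] with n hn
      have hn' : (n:ℝ) ≠ 0 := by positivity
      field_simp
    have t2 : Tendsto (fun n : ℕ => (1/(n:ℝ)) * ∑ m ∈ range (n+1), c m) atTop (nhds 0) := by
      have := hq.mul hs1
      rw [one_mul] at this
      apply this.congr
      intro n
      by_cases hn : (n:ℝ) = 0
      · simp [hn]
      · push_cast
        field_simp
    have := t1.add t2
    rw [add_zero] at this
    exact this.congr fun n => (mul_add _ _ _).symm
  · intro n
    have h0 : (0:ℝ) ≤ 1/(n:ℝ) := by positivity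
    have := mul_le_mul_of_nonneg_left (h n) h0
    rw [mul_add] at this
    exact this

theorem stmt10 (k r H x : ℕ → ℝ) (ξ : ℝ)
    (hk : Summable fun j => |k j|)
    (hres : IsResolvent k r) (hrs : Summable fun j => |r j|)
    (hx0 : x 0 = ξ) (hx : IsVolterraSol k H x)
    (φ : ℝ → ℝ) (hφ0 : ∀ t : ℝ, 0 ≤ t → 0 ≤ φ t)
    (hφmono : MonotoneOn φ (Set.Ici 0))
    (hφconv : ConvexOn ℝ (Set.Ici 0) φ) :
    Filter.limsup
        (fun n : ℕ =>
          (((1 / (n : ℝ)) * ∑ j ∈ Finset.range (n + 1), φ |x j| : ℝ) : EReal))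
        atTop ≤
      Filter.limsup
        (fun n : ℕ =>
          (((1 / (n : ℝ)) *
              ∑ j ∈ Finset.range (n + 1), φ ((∑' i : ℕ, |r i|) * |H j|) : ℝ) : EReal))
        atTop ∧
    Filter.limsup
        (fun n : ℕ =>
          (((1 / (n : ℝ)) * ∑ j ∈ Finset.range (n + 1), φ |H j| : ℝ) : EReal))
        atTop ≤
      Filter.limsup
        (fun n : ℕ =>
          (((1 / (n : ℝ)) *
              ∑ j ∈ Finset.range (n + 1), φ ((1 + ∑' i : ℕ, |k i|) * |x j|) : ℝ) : EReal))
        atTop := by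
  set R := ∑' i : ℕ, |r i| with hRdef
  set K := ∑' i : ℕ, |k i| with hKdef
  have hR1 : 1 ≤ R := by
    have := Summable.le_tsum hrs 0 (fun i _ => abs_nonneg _)
    simpa [hres.1] using this
  have hR0 : (0:ℝ) < R := by linarith
  have hRne : R ≠ 0 := ne_of_gt hR0
  have hpartr : ∀ N, ∑ i ∈ range N, |r i| ≤ R :=
    fun N => Summable.sum_le_tsum (range N) (fun i _ => abs_nonneg _) hrs
  have hK0 : (0:ℝ) ≤ K := tsum_nonneg (fun i => abs_nonneg _)
  have hK1 : (0:ℝ) < 1 + K := by linarith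
  have hKne : (1:ℝ) + K ≠ 0 := ne_of_gt hK1
  have hpartk : ∀ N, ∑ i ∈ range N, |k i| ≤ K :=
    fun N => Summable.sum_le_tsum (range N) (fun i _ => abs_nonneg _) hk
  constructor
  · -- Part 1
    have key1 : ∀ m : ℕ, φ |x m| ≤ (∑ j ∈ range m, (|r (m - 1 - j)| / R) * φ (R * |H (j+1)|))
        + (|r m| / R) * φ (R * |ξ|)
        + (1 - (∑ i ∈ range (m+1), |r i|) / R) * φ 0 := by
      intro m
      have hrefl : ∑ i ∈ range (m+1), |r (m - i)| = ∑ i ∈ range (m+1), |r i| :=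
        Finset.sum_range_reflect (fun i => |r i|) (m+1)
      have hw1 : ∑ i ∈ range (m+1), |r (m - i)| / R ≤ 1 := by
        rw [← Finset.sum_div, hrefl]
        exact div_le_one_of_le₀ (hpartr (m+1)) hR0.le
      have ht : |x m| ≤ ∑ i ∈ range (m+1),
          (|r (m - i)| / R) * (if i = 0 then R * |ξ| else R * |H i|) := by
        rw [Finset.sum_range_succ']
        have hterm : ∀ i ∈ range m,
            (|r (m - (i+1))| / R) * (if i + 1 = 0 then R * |ξ| else R * |H (i+1)|)
            = |r (m - 1 - i)| * |H (i+1)| := by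
          intro i _
          rw [if_neg (Nat.succ_ne_zero i), show m - (i+1) = m - 1 - i by omega]
          field_simp
        rw [Finset.sum_congr rfl hterm]
        have hf0 : (|r (m - 0)| / R) * (if (0:ℕ) = 0 then R * |ξ| else R * |H 0|)
            = |r m| * |ξ| := by
          rw [if_pos rfl, Nat.sub_zero]; field_simp
        rw [hf0]
        have hvoc := aux_voc k r H x ξ hres hx0 hx m
        calc |x m| = |r m * ξ + ∑ j ∈ range m, r (m - 1 - j) * H (j + 1)| := by rw [← hvoc]
          _ ≤ |r m * ξ| + |∑ j ∈ range m, r (m - 1 - j) * H (j + 1)| := abs_add_le _ _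
          _ ≤ |r m| * |ξ| + ∑ j ∈ range m, |r (m - 1 - j)| * |H (j + 1)| := by
              rw [abs_mul]
              refine add_le_add le_rfl ((Finset.abs_sum_le_sum_abs _ _).trans ?_)
              exact le_of_eq (Finset.sum_congr rfl fun j _ => abs_mul _ _)
          _ ≤ ∑ i ∈ range m, |r (m - 1 - i)| * |H (i+1)| + |r m| * |ξ| := le_of_eq (by ring)
      have hj := aux_jensen φ hφmono hφconv (m+1)
          (fun i => |r (m - i)| / R)
          (fun i => if i = 0 then R * |ξ| else R * |H i|)
          (fun i _ => by positivity)
          (fun i _ => by split <;> positivity)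
          hw1 |x m| (abs_nonneg _) ht
      refine hj.trans (le_of_eq ?_)
      beta_reduce
      rw [Finset.sum_range_succ', ← Finset.sum_div, hrefl]
      congr 1
      congr 1
      · apply Finset.sum_congr rfl
        intro i _
        rw [if_neg (by omega : ¬(i + 1 = 0)), show m - (i+1) = m - 1 - i by omega]
    have key1n : ∀ n : ℕ, ∑ m ∈ range (n+1), φ |x m|
        ≤ (∑ j ∈ range (n+1), φ (R * |H j|))
          + (φ (R * |ξ|) + ∑ m ∈ range (n+1), (1 - (∑ i ∈ range (m+1), |r i|) / R) * φ 0) := by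
      intro n
      have hφξ : 0 ≤ φ (R * |ξ|) := hφ0 _ (by positivity)
      have hsum := Finset.sum_le_sum (fun m (_ : m ∈ range (n+1)) => key1 m)
      rw [Finset.sum_add_distrib, Finset.sum_add_distrib] at hsum
      have hA : ∑ m ∈ range (n+1), (|r m| / R) * φ (R * |ξ|) ≤ φ (R * |ξ|) := by
        rw [← Finset.sum_mul, ← Finset.sum_div]
        have h1 : (∑ m ∈ range (n+1), |r m|) / R ≤ 1 := div_le_one_of_le₀ (hpartr _) hR0.le
        nlinarith
      have hB : ∑ m ∈ range (n+1), ∑ j ∈ range m, (|r (m-1-j)| / R) * φ (R * |H (j+1)|)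
          ≤ ∑ j ∈ range (n+1), φ (R * |H j|) := by
        rw [aux_triangle]
        rw [Finset.sum_range_succ]
        have hlast : (∑ m ∈ range (n+1),
            if n < m then (|r (m-1-n)| / R) * φ (R * |H (n+1)|) else 0) = 0 := by
          apply Finset.sum_eq_zero
          intro m hm
          rw [if_neg]
          have := mem_range.1 hm
          omega
        rw [hlast, add_zero]
        have hinner : ∀ j ∈ range n, (∑ m ∈ range (n+1),
            if j < m then (|r (m-1-j)| / R) * φ (R * |H (j+1)|) else 0) ≤ φ (R * |H (j+1)|) := by
          intro j _
          rw [aux_ite_sum]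
          have hterm : ∀ t ∈ range (n - j),
              (|r (j+1+t-1-j)| / R) * φ (R * |H (j+1)|) = (|r t| / R) * φ (R * |H (j+1)|) :=
            fun t _ => by rw [show j+1+t-1-j = t by omega]
          rw [Finset.sum_congr rfl hterm, ← Finset.sum_mul, ← Finset.sum_div]
          have h1 : (∑ t ∈ range (n-j), |r t|) / R ≤ 1 := div_le_one_of_le₀ (hpartr _) hR0.le
          have h2 : 0 ≤ φ (R * |H (j+1)|) := hφ0 _ (by positivity)
          nlinarith
        calc ∑ j ∈ range n, (∑ m ∈ range (n+1),
              if j < m then (|r (m-1-j)| / R) * φ (R * |H (j+1)|) else 0)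
            ≤ ∑ j ∈ range n, φ (R * |H (j+1)|) := Finset.sum_le_sum hinner
          _ ≤ ∑ j ∈ range (n+1), φ (R * |H j|) := by
              rw [Finset.sum_range_succ']
              have : 0 ≤ φ (R * |H 0|) := hφ0 _ (by positivity)
              linarith
      linarith
    have hc : Tendsto (fun m : ℕ => (1 - (∑ i ∈ range (m+1), |r i|) / R) * φ 0)
        atTop (nhds 0) := by
      have hS : Tendsto (fun m : ℕ => ∑ i ∈ range (m+1), |r i|) atTop (nhds R) :=
        hrs.hasSum.tendsto_sum_nat.comp (tendsto_add_atTop_nat 1)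
      have := (((tendsto_const_nhds : Tendsto (fun _ : ℕ => (1:ℝ)) atTop (nhds 1)).sub
        (hS.div_const R)).mul_const (φ 0))
      rw [div_self hRne] at this
      simpa using this
    exact aux_main _ _ _ _ hc key1n
  · -- Part 2
    have key2 : ∀ m : ℕ, φ |H (m+1)| ≤ (∑ j ∈ range (m+1), (|k (m-j)| / (1+K)) * φ ((1+K) * |x j|))
        + (1 / (1+K)) * φ ((1+K) * |x (m+1)|)
        + (1 - (∑ i ∈ range (m+1), |k i| + 1) / (1+K)) * φ 0 := by
      intro m
      have hrefl : ∑ i ∈ range (m+1), |k (m - i)| = ∑ i ∈ range (m+1), |k i| :=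
        Finset.sum_range_reflect (fun i => |k i|) (m+1)
      have hsw : ∑ i ∈ range (m+2), (if i < m + 1 then |k (m - i)| / (1+K) else 1 / (1+K))
          = (∑ i ∈ range (m+1), |k i| + 1) / (1+K) := by
        rw [Finset.sum_range_succ, if_neg (lt_irrefl (m+1))]
        rw [Finset.sum_congr rfl (fun i hi => if_pos (mem_range.1 hi)), ← Finset.sum_div, hrefl]
        field_simp
      have hw1 : ∑ i ∈ range (m+2), (if i < m + 1 then |k (m - i)| / (1+K) else 1 / (1+K)) ≤ 1 := by
        rw [hsw]
        apply div_le_one_of_le₀ _ hK1.le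
        have := hpartk (m+1)
        linarith
      have ht : |H (m+1)| ≤ ∑ i ∈ range (m+2),
          (if i < m + 1 then |k (m - i)| / (1+K) else 1 / (1+K)) * ((1+K) * |x i|) := by
        rw [Finset.sum_range_succ, if_neg (lt_irrefl (m+1))]
        have hterm : ∀ i ∈ range (m+1),
            (if i < m + 1 then |k (m - i)| / (1+K) else 1 / (1+K)) * ((1+K) * |x i|)
            = |k (m - i)| * |x i| := by
          intro i hi
          rw [if_pos (mem_range.1 hi)]
          field_simp
        rw [Finset.sum_congr rfl hterm]
        have hf0 : 1 / (1+K) * ((1+K) * |x (m+1)|) = |x (m+1)| := by field_simp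
        rw [hf0]
        have hHm : H (m+1) = x (m+1) - ∑ j ∈ range (m+1), k (m - j) * x j := by
          rw [hx m]; ring
        calc |H (m+1)| = |x (m+1) - ∑ j ∈ range (m+1), k (m - j) * x j| := by rw [hHm]
          _ ≤ |x (m+1)| + |∑ j ∈ range (m+1), k (m - j) * x j| := abs_sub _ _
          _ ≤ |x (m+1)| + ∑ j ∈ range (m+1), |k (m - j)| * |x j| := by
              refine add_le_add le_rfl ((Finset.abs_sum_le_sum_abs _ _).trans ?_)
              exact le_of_eq (Finset.sum_congr rfl fun j _ => abs_mul _ _)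
          _ = ∑ i ∈ range (m+1), |k (m - i)| * |x i| + |x (m+1)| := by ring
      have hj := aux_jensen φ hφmono hφconv (m+2)
          (fun i => if i < m + 1 then |k (m - i)| / (1+K) else 1 / (1+K))
          (fun i => (1+K) * |x i|)
          (fun i _ => by split <;> positivity)
          (fun i _ => by positivity)
          hw1 |H (m+1)| (abs_nonneg _) ht
      refine hj.trans (le_of_eq ?_)
      beta_reduce
      rw [Finset.sum_range_succ, if_neg (lt_irrefl (m+1)), hsw]
      congr 2
      apply Finset.sum_congr rfl
      intro i hi
      rw [if_pos (mem_range.1 hi)]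
    have key2n : ∀ n : ℕ, ∑ m ∈ range (n+1), φ |H m|
        ≤ (∑ j ∈ range (n+1), φ ((1+K) * |x j|))
          + (φ |H 0| + ∑ m ∈ range (n+1), (1 - (∑ i ∈ range (m+1), |k i| + 1) / (1+K)) * φ 0) := by
      intro n
      have hc2nn : ∀ m : ℕ, 0 ≤ (1 - (∑ i ∈ range (m+1), |k i| + 1) / (1+K)) * φ 0 := by
        intro m
        apply mul_nonneg _ (hφ0 0 le_rfl)
        have h1 : (∑ i ∈ range (m+1), |k i| + 1) / (1+K) ≤ 1 := by
          apply div_le_one_of_le₀ _ hK1.le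
          have := hpartk (m+1)
          linarith
        linarith
      have hLHS : ∑ m ∈ range (n+1), φ |H m| = ∑ m ∈ range n, φ |H (m+1)| + φ |H 0| :=
        Finset.sum_range_succ' _ n
      have hsum := Finset.sum_le_sum (fun m (_ : m ∈ range n) => key2 m)
      rw [Finset.sum_add_distrib, Finset.sum_add_distrib] at hsum
      have hT2 : ∑ m ∈ range n, (1 / (1+K)) * φ ((1+K) * |x (m+1)|)
          ≤ (1 / (1+K)) * ∑ j ∈ range (n+1), φ ((1+K) * |x j|) := by
        rw [← Finset.mul_sum]
        apply mul_le_mul_of_nonneg_left _ (by positivity)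
        rw [Finset.sum_range_succ']
        have : 0 ≤ φ ((1+K) * |x 0|) := hφ0 _ (by positivity)
        linarith
      have hT1 : ∑ m ∈ range n, ∑ j ∈ range (m+1), (|k (m-j)| / (1+K)) * φ ((1+K) * |x j|)
          ≤ ∑ j ∈ range (n+1), (K / (1+K)) * φ ((1+K) * |x j|) := by
        have hre : ∑ m ∈ range (n+1), ∑ j ∈ range m, (|k (m-1-j)| / (1+K)) * φ ((1+K) * |x j|)
            = ∑ m ∈ range n, ∑ j ∈ range (m+1), (|k (m-j)| / (1+K)) * φ ((1+K) * |x j|) := by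
          rw [Finset.sum_range_succ' (fun m => ∑ j ∈ range m, (|k (m-1-j)| / (1+K)) * φ ((1+K) * |x j|)) n]
          simp
        rw [← hre, aux_triangle]
        apply Finset.sum_le_sum
        intro j _
        rw [aux_ite_sum]
        have hterm : ∀ t ∈ range (n - j),
            (|k (j+1+t-1-j)| / (1+K)) * φ ((1+K) * |x j|) = (|k t| / (1+K)) * φ ((1+K) * |x j|) :=
          fun t _ => by rw [show j+1+t-1-j = t by omega]
        rw [Finset.sum_congr rfl hterm, ← Finset.sum_mul, ← Finset.sum_div]
        have h2 : 0 ≤ φ ((1+K) * |x j|) := hφ0 _ (by positivity)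
        apply mul_le_mul_of_nonneg_right _ h2
        exact (div_le_div_iff_of_pos_right hK1).2 (hpartk _)
      have hmerge : ∑ j ∈ range (n+1), (K / (1+K)) * φ ((1+K) * |x j|)
          + (1 / (1+K)) * ∑ j ∈ range (n+1), φ ((1+K) * |x j|)
          = ∑ j ∈ range (n+1), φ ((1+K) * |x j|) := by
        rw [← Finset.mul_sum, ← add_mul]
        have : K / (1+K) + 1 / (1+K) = 1 := by rw [← add_div, div_eq_one_iff_eq hKne]; ring
        rw [this, one_mul]
      have hT3 : ∑ m ∈ range n, (1 - (∑ i ∈ range (m+1), |k i| + 1) / (1+K)) * φ 0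
          ≤ ∑ m ∈ range (n+1), (1 - (∑ i ∈ range (m+1), |k i| + 1) / (1+K)) * φ 0 := by
        apply Finset.sum_le_sum_of_subset_of_nonneg (Finset.range_subset_range.2 (Nat.le_succ n))
        intro m _ _
        exact hc2nn m
      linarith
    have hc : Tendsto (fun m : ℕ => (1 - (∑ i ∈ range (m+1), |k i| + 1) / (1+K)) * φ 0)
        atTop (nhds 0) := by
      have hS : Tendsto (fun m : ℕ => ∑ i ∈ range (m+1), |k i|) atTop (nhds K) :=
        hk.hasSum.tendsto_sum_nat.comp (tendsto_add_atTop_nat 1)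
      have := (((tendsto_const_nhds : Tendsto (fun _ : ℕ => (1:ℝ)) atTop (nhds 1)).sub
        ((hS.add_const 1).div_const (1+K))).mul_const (φ 0))
      rw [show (K + 1) / (1+K) = 1 by rw [div_eq_one_iff_eq hKne]; ring] at this
      simpa using this
    exact aux_main _ _ _ _ hc key2n
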